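/- Let f : ℤ → ℝ be nonnegative and suppose f(m)/m² converges to a finite limit L > 0 as |m| → ∞. Let (ν_n)_{n≥1} be a sequence of probability measures on ℤ such that f is ν_n-integrable and ∫ f dν_n = n for each n ≥ 1. Then the function m ↦ m² is ν_n-integrable for every n, and (1/n) ∫ m² dν_n(m) → 1/L as n → ∞. -/

import Mathlib

open Filter MeasureTheory

theorem stmt_4 (f : ℤ → ℝ) (hf : ∀ m, 0 ≤ f m)
    (L : ℝ) (hL : 0 < L)
    (hlim : Tendsto (fun m : ℤ => f m / (m : ℝ) ^ 2) cofinite (nhds L))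
    (ν : ℕ → Measure ℤ) (hprob : ∀ n, IsProbabilityMeasure (ν n))
    (hfint : ∀ n : ℕ, 1 ≤ n → Integrable f (ν n))
    (hmean : ∀ n : ℕ, 1 ≤ n → (∫ m, f m ∂ν n) = n) :
    (∀ n : ℕ, 1 ≤ n → Integrable (fun m : ℤ => (m : ℝ) ^ 2) (ν n)) ∧
      Tendsto (fun n : ℕ => (1 / (n : ℝ)) * ∫ m, (m : ℝ) ^ 2 ∂ν n) atTop
        (nhds (1 / L)) := by
  have key : ∀ ε : ℝ, 0 < ε → ε < L → ∃ B C : ℝ, 0 ≤ B ∧ 0 ≤ C ∧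
      ∀ m : ℤ, ((m:ℝ)^2 ≤ f m / (L - ε) + B ∧ f m / (L + ε) ≤ (m:ℝ)^2 + C) := by
    intro ε hε hεL
    have hLe : 0 < L - ε := by linarith
    have hLp : 0 < L + ε := by linarith
    have hball : ∀ᶠ m : ℤ in cofinite, |f m / (m:ℝ)^2 - L| < ε := by
      have := hlim (Metric.ball_mem_nhds L hε)
      filter_upwards [this] with m hm
      simpa [Real.dist_eq] using hm
    have hS : {m : ℤ | ¬ |f m / (m:ℝ)^2 - L| < ε}.Finite :=
      Filter.eventually_cofinite.1 hball
    have hT : (insert (0:ℤ) {m : ℤ | ¬ |f m / (m:ℝ)^2 - L| < ε}).Finite := hS.insert 0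
    set Tf := hT.toFinset with hTf
    refine ⟨∑ m ∈ Tf, (m:ℝ)^2, ∑ m ∈ Tf, f m / (L + ε), ?_, ?_, ?_⟩
    · exact Finset.sum_nonneg fun m _ => by positivity
    · exact Finset.sum_nonneg fun m _ => div_nonneg (hf m) hLp.le
    · intro m
      by_cases hm : m ∈ Tf
      · have h1 : (m:ℝ)^2 ≤ ∑ m ∈ Tf, (m:ℝ)^2 :=
          Finset.single_le_sum (f := fun m : ℤ => (m:ℝ)^2) (fun i _ => by positivity) hm
        have h2 : f m / (L + ε) ≤ ∑ m ∈ Tf, f m / (L + ε) :=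
          Finset.single_le_sum (f := fun m : ℤ => f m / (L + ε))
            (fun i _ => div_nonneg (hf i) hLp.le) hm
        constructor
        · have : 0 ≤ f m / (L - ε) := div_nonneg (hf m) hLe.le
          linarith
        · have : 0 ≤ (m:ℝ)^2 := by positivity
          linarith
      · have hm' : m ∉ insert (0:ℤ) {m : ℤ | ¬ |f m / (m:ℝ)^2 - L| < ε} := by
          simpa [hTf, Set.Finite.mem_toFinset] using hm
        have hm0 : m ≠ 0 := fun h => hm' (by simp [h])
        have habs : |f m / (m:ℝ)^2 - L| < ε := by
          by_contra h
          exact hm' (Set.mem_insert_of_mem _ h)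
        have hm2 : (0:ℝ) < (m:ℝ)^2 := by
          have : (m:ℝ) ≠ 0 := Int.cast_ne_zero.2 hm0
          positivity
        rw [abs_lt] at habs
        have hlow : (L - ε) * (m:ℝ)^2 < f m := by
          have : L - ε < f m / (m:ℝ)^2 := by linarith [habs.1]
          exact (lt_div_iff₀ hm2).1 this
        have hhigh : f m < (L + ε) * (m:ℝ)^2 := by
          have : f m / (m:ℝ)^2 < L + ε := by linarith [habs.2]
          exact (div_lt_iff₀ hm2).1 this
        have hBnn : 0 ≤ ∑ m ∈ Tf, (m:ℝ)^2 := Finset.sum_nonneg fun m _ => by positivity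
        have hCnn : 0 ≤ ∑ m ∈ Tf, f m / (L + ε) :=
          Finset.sum_nonneg fun m _ => div_nonneg (hf m) hLp.le
        constructor
        · have : (m:ℝ)^2 ≤ f m / (L - ε) := by
            rw [le_div_iff₀ hLe]; nlinarith
          linarith
        · have : f m / (L + ε) ≤ (m:ℝ)^2 := by
            rw [div_le_iff₀ hLp]; nlinarith
          linarith
  have hint : ∀ n : ℕ, 1 ≤ n → Integrable (fun m : ℤ => (m : ℝ) ^ 2) (ν n) := by
    intro n hn
    obtain ⟨B, C, hB, hC, hbd⟩ := key (L/2) (by linarith) (by linarith)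
    have hgint : Integrable (fun m => f m / (L - L/2) + B) (ν n) :=
      ((hfint n hn).div_const _).add (integrable_const B)
    refine hgint.mono' ((measurable_of_countable _).aestronglyMeasurable) ?_
    filter_upwards with m
    rw [Real.norm_eq_abs, abs_of_nonneg (by positivity)]
    exact (hbd m).1
  refine ⟨hint, ?_⟩
  have main : ∀ δ : ℝ, 0 < δ →
      ∀ᶠ n : ℕ in atTop, |(1/(n:ℝ)) * (∫ m, (m:ℝ)^2 ∂ν n) - 1/L| ≤ δ := by
    intro δ hδ
    set ε := min (L/2) (δ*L^2/4) with hεdef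
    have hε : 0 < ε := lt_min (by linarith) (by positivity)
    have hεL2 : ε ≤ L/2 := min_le_left _ _
    have hεδ : ε ≤ δ*L^2/4 := min_le_right _ _
    have hεL : ε < L := lt_of_le_of_lt hεL2 (by linarith)
    obtain ⟨B, C, hB, hC, hbd⟩ := key ε hε hεL
    have hLe : 0 < L - ε := by linarith
    have hLp : 0 < L + ε := by linarith
    have h1 : 1/(L-ε) ≤ 1/L + δ/2 := by
      have hrw : 1/L + δ/2 = (2 + δ*L)/(2*L) := by
        field_simp [hL.ne']
        all_goals first | (left; first | trivial | ring) | ring1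
      rw [hrw, div_le_div_iff₀ hLe (by positivity)]
      nlinarith [mul_le_mul_of_nonneg_left hεL2 (by positivity : (0:ℝ) ≤ δ*L)]
    have h2 : 1/L - δ/2 ≤ 1/(L+ε) := by
      have hrw : 1/L - δ/2 = (2 - δ*L)/(2*L) := by
        field_simp [hL.ne']
        all_goals first | (left; first | trivial | ring) | ring1
      rw [hrw, div_le_div_iff₀ (by positivity) hLp]
      nlinarith [mul_nonneg (mul_nonneg hδ.le hL.le) hε.le]
    have hBn : ∀ᶠ n : ℕ in atTop, B/(n:ℝ) < δ/2 :=
      (tendsto_const_div_atTop_nhds_zero_nat B).eventually_lt_const (by linarith)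
    have hCn : ∀ᶠ n : ℕ in atTop, C/(n:ℝ) < δ/2 :=
      (tendsto_const_div_atTop_nhds_zero_nat C).eventually_lt_const (by linarith)
    filter_upwards [hBn, hCn, eventually_ge_atTop 1] with n hBn' hCn' hn1
    have hn1' : (1:ℝ) ≤ (n:ℝ) := by exact_mod_cast hn1
    have hnpos : (0:ℝ) < (n:ℝ) := by linarith
    have hint2 := hint n hn1
    have hfi := hfint n hn1
    have := hprob n
    have hI1 : (∫ m, (m:ℝ)^2 ∂ν n) ≤ (n:ℝ)/(L-ε) + B := by
      have h : (∫ m, (m:ℝ)^2 ∂ν n) ≤ ∫ m, (f m / (L-ε) + B) ∂ν n :=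
        integral_mono hint2 ((hfi.div_const (L-ε)).add (integrable_const B))
          (fun m => (hbd m).1)
      rwa [integral_add (hfi.div_const _) (integrable_const B), integral_div,
        hmean n hn1, integral_const, probReal_univ, one_smul] at h
    have hI2 : (n:ℝ)/(L+ε) ≤ (∫ m, (m:ℝ)^2 ∂ν n) + C := by
      have h : (∫ m, f m / (L+ε) ∂ν n) ≤ ∫ m, ((m:ℝ)^2 + C) ∂ν n :=
        integral_mono (hfi.div_const (L+ε)) (hint2.add (integrable_const C))
          (fun m => (hbd m).2)
      rwa [integral_div, hmean n hn1, integral_add hint2 (integrable_const C),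
        integral_const, probReal_univ, one_smul] at h
    set I := ∫ m, (m:ℝ)^2 ∂ν n with hI
    rw [abs_le]
    have heq1 : (1/(n:ℝ)) * ((n:ℝ)/(L-ε) + B) = 1/(L-ε) + B/(n:ℝ) := by
      field_simp [hnpos.ne', hLe.ne']
      all_goals first | (left; first | trivial | ring) | ring1
    have heq2 : (1/(n:ℝ)) * ((n:ℝ)/(L+ε) - C) = 1/(L+ε) - C/(n:ℝ) := by
      field_simp [hnpos.ne', hLp.ne']
      all_goals first | (left; first | trivial | ring) | ring1
    constructor
    · have hge : (1/(n:ℝ)) * ((n:ℝ)/(L+ε) - C) ≤ (1/(n:ℝ)) * I :=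
        mul_le_mul_of_nonneg_left (by linarith) (by positivity)
      rw [heq2] at hge
      linarith
    · have hle : (1/(n:ℝ)) * I ≤ (1/(n:ℝ)) * ((n:ℝ)/(L-ε) + B) :=
        mul_le_mul_of_nonneg_left hI1 (by positivity)
      rw [heq1] at hle
      linarith
  rw [Metric.tendsto_atTop]
  intro δ hδ
  have h := main (δ/2) (by linarith)
  rw [eventually_atTop] at h
  obtain ⟨N, hN⟩ := h
  exact ⟨N, fun n hn => by rw [Real.dist_eq]; have := hN n hn; linarith⟩
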